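/- The group presented by generators ã_i, b̃_i, c̃_i, d̃_i (i ∈ Z/3) and relations d̃_0 d̃_1 d̃_2 = 1, b̃_i d̃_i = d̃_i b̃_i = 1, ã_i = ã_{i+1} d̃_{i-1}, b̃_i = ã_{i-1} c̃_{i+1}, c̃_i = b̃_{i-1} c̃_{i+1}, d̃_i = ã_{i+1} c̃_{i-1}, together with the relations (d̃_i c̃_i) w = w (d̃_i c̃_i) for w ∈ {c̃_{i+1}, b̃_i d̃_{i+1} d̃_i} and u v = v u for u ∈ {ã_i b̃_i, b̃_{i-1} d̃_i d̃_{i-1} b̃_i}, v ∈ {ã_{i+1}, b̃_{i+1}, c̃_{i+1}, b̃_i d̃_{i+1} d̃_i}, is isomorphic to the free abelian group Z^3, with the images of ã_0, ã_1, ã_2 forming a free basis, and with b̃_i = ã_{i-1} ã_{i+1}^{-1}, c̃_i = ã_i^{-1}, d̃_i = ã_{i+1} ã_{i-1}^{-1}. -/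
import Mathlib

/-- The 12 group generators `ã_i, b̃_i, c̃_i, d̃_i` (`i ∈ ℤ/3`). -/
inductive Letter : Type
  | a (i : ZMod 3)
  | b (i : ZMod 3)
  | c (i : ZMod 3)
  | d (i : ZMod 3)

/-- A generator as an element of the free group. -/
def f (x : Letter) : FreeGroup Letter := FreeGroup.of x

/-- The relators corresponding to the defining relations (1)-(3), (7), (8)
of the Dynnikov semigroup, written as words `lhs * rhs⁻¹`. -/
inductive isRel : FreeGroup Letter → Prop
  | r1 : isRel (f (.d 0) * f (.d 1) * f (.d 2))
  | r2a (i : ZMod 3) : isRel (f (.b i) * f (.d i))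
  | r2b (i : ZMod 3) : isRel (f (.d i) * f (.b i))
  | r3a (i : ZMod 3) : isRel (f (.a i) * (f (.a (i + 1)) * f (.d (i - 1)))⁻¹)
  | r3b (i : ZMod 3) : isRel (f (.b i) * (f (.a (i - 1)) * f (.c (i + 1)))⁻¹)
  | r3c (i : ZMod 3) : isRel (f (.c i) * (f (.b (i - 1)) * f (.c (i + 1)))⁻¹)
  | r3d (i : ZMod 3) : isRel (f (.d i) * (f (.a (i + 1)) * f (.c (i - 1)))⁻¹)
  | r7 (i : ZMod 3) (w : FreeGroup Letter)
      (hw : w = f (.c (i + 1)) ∨ w = f (.b i) * f (.d (i + 1)) * f (.d i)) :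
      isRel (f (.d i) * f (.c i) * w * (w * (f (.d i) * f (.c i)))⁻¹)
  | r8 (i : ZMod 3) (u v : FreeGroup Letter)
      (hu : u = f (.a i) * f (.b i) ∨
            u = f (.b (i - 1)) * f (.d i) * f (.d (i - 1)) * f (.b i))
      (hv : v = f (.a (i + 1)) ∨ v = f (.b (i + 1)) ∨ v = f (.c (i + 1)) ∨
            v = f (.b i) * f (.d (i + 1)) * f (.d i)) :
      isRel (u * v * (v * u)⁻¹)

/-- The relator set. -/
def rels : Set (FreeGroup Letter) := {w | isRel w}

/-- The group associated with the Dynnikov semigroup `DS = RSG_2`. -/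
abbrev DSGroup : Type := PresentedGroup rels

/-! ### Auxiliary index lemmas in `ZMod 3` -/

lemma idx1 : ∀ j : ZMod 3, j - 1 - 1 = j + 1 := by decide
lemma idx2 : ∀ j : ZMod 3, j - 1 + 1 = j := by decide
lemma idx3 : ∀ j : ZMod 3, j + 1 - 1 = j := by decide
lemma idx4 : ∀ j : ZMod 3, j + 1 + 1 = j - 1 := by decide
lemma cidx1 : (0 : ZMod 3) + 1 = 1 := by decide
lemma cidx2 : (0 : ZMod 3) - 1 = 2 := by decide
lemma cidx3 : (1 : ZMod 3) + 1 = 2 := by decide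
lemma cidx4 : (1 : ZMod 3) - 1 = 0 := by decide
lemma cidx5 : (2 : ZMod 3) + 1 = 0 := by decide
lemma cidx6 : (2 : ZMod 3) - 1 = 1 := by decide
lemma zmod3_cases : ∀ i : ZMod 3, i = 0 ∨ i = 1 ∨ i = 2 := by decide

/-! ### The core commutation argument -/

theorem ds_core {G : Type*} [Group G] (x y z : G)
    (Hqy : Commute y (z * x⁻¹)) (Hqz : Commute z (x * y⁻¹)) (Hqx : Commute x (y * z⁻¹))
    (Hsx : Commute x (z * x⁻¹ * y)) (Hsy : Commute y (x * y⁻¹ * z))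
    (Hsz : Commute z (y * z⁻¹ * x))
    (H1 : z⁻¹ * y * (x⁻¹ * z) * (y⁻¹ * x) = 1) :
    Commute x y ∧ Commute y z ∧ Commute z x := by
  have hXy : Commute (x * y⁻¹ * z) y := Hsy.symm
  have hXz : Commute (x * y⁻¹ * z) z := (Hqz.mul_right (Commute.refl z)).symm
  have hXx : Commute (x * y⁻¹ * z) x := by
    have h := (Commute.refl (x * y⁻¹ * z)).mul_right (hXz.inv_right.mul_right hXy)
    rwa [show x * y⁻¹ * z * (z⁻¹ * y) = x from by group] at h
  have hYz : Commute (y * z⁻¹ * x) z := Hsz.symm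
  have hYx : Commute (y * z⁻¹ * x) x := (Hqx.mul_right (Commute.refl x)).symm
  have hYy : Commute (y * z⁻¹ * x) y := by
    have h := (Commute.refl (y * z⁻¹ * x)).mul_right (hYx.inv_right.mul_right hYz)
    rwa [show y * z⁻¹ * x * (x⁻¹ * z) = y from by group] at h
  have hZx : Commute (z * x⁻¹ * y) x := Hsx.symm
  have hZy : Commute (z * x⁻¹ * y) y := (Hqy.mul_right (Commute.refl y)).symm
  have hZz : Commute (z * x⁻¹ * y) z := by
    have h := (Commute.refl (z * x⁻¹ * y)).mul_right (hZy.inv_right.mul_right hZx)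
    rwa [show z * x⁻¹ * y * (y⁻¹ * x) = z from by group] at h
  have hxy : Commute x y := by
    have hc : Commute (x * y⁻¹ * z) (y * x⁻¹) := hXy.mul_right hXx.inv_right
    have h := H1
    rw [show z⁻¹ * y * (x⁻¹ * z) * (y⁻¹ * x)
        = (x * y⁻¹ * z)⁻¹ * ((y * x⁻¹) * (x * y⁻¹ * z)) * (y⁻¹ * x) from by group] at h
    rw [← hc.eq] at h
    have k' : (y * x⁻¹) * (y⁻¹ * x) = 1 := by rw [← h]; group
    have e : y * x⁻¹ = x⁻¹ * y := by
      rw [eq_inv_of_mul_eq_one_left k']; group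
    show x * y = y * x
    calc x * y = x * (y * x⁻¹) * x := by group
      _ = x * (x⁻¹ * y) * x := by rw [e]
      _ = y * x := by group
  have hyz : Commute y z := by
    have hc : Commute (y * z⁻¹ * x) (z * y⁻¹) := hYz.mul_right hYy.inv_right
    have h := H1
    rw [show z⁻¹ * y * (x⁻¹ * z) * (y⁻¹ * x)
        = (z⁻¹ * y) * ((y * z⁻¹ * x)⁻¹ * ((z * y⁻¹) * (y * z⁻¹ * x))) from by group] at h
    rw [← hc.eq] at h
    have k' : (z⁻¹ * y) * (z * y⁻¹) = 1 := by rw [← h]; group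
    have e : z⁻¹ * y = y * z⁻¹ := by
      rw [eq_inv_of_mul_eq_one_left k']; group
    show y * z = z * y
    calc y * z = z * (z⁻¹ * y) * z := by group
      _ = z * (y * z⁻¹) * z := by rw [e]
      _ = z * y := by group
  have hzx : Commute z x := by
    have hc : Commute (z * x⁻¹ * y) (x⁻¹ * z) := hZx.inv_right.mul_right hZz
    have h := H1
    rw [show z⁻¹ * y * (x⁻¹ * z) * (y⁻¹ * x)
        = z⁻¹ * (x * z⁻¹) * (((z * x⁻¹ * y) * (x⁻¹ * z)) * (z * x⁻¹ * y)⁻¹) * z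
        from by group] at h
    rw [hc.eq] at h
    have k' : (x * z⁻¹) * (x⁻¹ * z) = 1 := by
      calc (x * z⁻¹) * (x⁻¹ * z)
          = z * (z⁻¹ * (x * z⁻¹) * (((x⁻¹ * z) * (z * x⁻¹ * y)) * (z * x⁻¹ * y)⁻¹) * z) * z⁻¹ := by
            group
        _ = z * 1 * z⁻¹ := by rw [h]
        _ = 1 := by group
    have e : x * z⁻¹ = z⁻¹ * x := by
      rw [eq_inv_of_mul_eq_one_left k']; group
    show z * x = x * z
    calc z * x = z * (x * z⁻¹) * z := by group
      _ = z * (z⁻¹ * x) * z := by rw [e]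
      _ = x * z := by group
  exact ⟨hxy, hyz, hzx⟩

/-! ### Consequences of the relations in an arbitrary group -/

theorem ds_derivation {G : Type*} [Group G] (A B C D : ZMod 3 → G)
    (h1 : D 0 * D 1 * D 2 = 1)
    (h2a : ∀ i, B i * D i = 1)
    (h3a : ∀ i, A i = A (i + 1) * D (i - 1))
    (h3b : ∀ i, B i = A (i - 1) * C (i + 1))
    (h3c : ∀ i, C i = B (i - 1) * C (i + 1))
    (h3d : ∀ i, D i = A (i + 1) * C (i - 1)) :
    (∀ i j, Commute (A i) (A j)) ∧ (∀ i, C i = (A i)⁻¹) ∧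
      (∀ i, B i = A (i - 1) * (A (i + 1))⁻¹) ∧
      (∀ i, D i = A (i + 1) * (A (i - 1))⁻¹) := by
  have hC : ∀ i, C i = (A (i - 1))⁻¹ * ((A i)⁻¹ * A (i - 1)) := by
    intro i
    have h := h3a (i - 1)
    rw [idx2, idx1, h3d (i + 1), idx4, idx3] at h
    have h2 : A (i - 1) * C i = (A i)⁻¹ * A (i - 1) := by
      conv_rhs => rw [h]
      group
    conv_rhs => rw [← h2]
    group
  have hD : ∀ i, D i = (A (i - 1))⁻¹ * A (i + 1) := by
    intro i
    have h := h3d i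
    rw [hC (i - 1), idx1] at h
    rw [h]; group
  have hB : ∀ i, B i = (A (i + 1))⁻¹ * A (i - 1) := by
    intro i
    have h := h2a i
    rw [hD i] at h
    rw [eq_inv_of_mul_eq_one_left h]
    group
  have hq : ∀ i, Commute (A (i + 1)) (A (i - 1) * (A i)⁻¹) := by
    intro i
    have h := h3b i
    rw [hB i, hC (i + 1), idx3] at h
    have h' : (A (i + 1))⁻¹ * (A (i - 1) * (A i)⁻¹) = (A (i - 1) * (A i)⁻¹) * (A (i + 1))⁻¹ := by
      calc (A (i + 1))⁻¹ * (A (i - 1) * (A i)⁻¹)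
          = ((A (i + 1))⁻¹ * A (i - 1)) * (A i)⁻¹ := by group
        _ = (A (i - 1) * ((A i)⁻¹ * ((A (i + 1))⁻¹ * A i))) * (A i)⁻¹ := by rw [h]
        _ = (A (i - 1) * (A i)⁻¹) * (A (i + 1))⁻¹ := by group
    have h'' : Commute (A (i + 1))⁻¹ (A (i - 1) * (A i)⁻¹) := h'
    exact Commute.inv_left_iff.mp h''
  have hs : ∀ i, Commute (A i) (A (i - 1) * (A i)⁻¹ * A (i + 1)) := by
    intro i
    have h := h3c i
    rw [hC i, hB (i - 1), hC (i + 1), idx1, idx2, idx3] at h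
    have h' : (A i)⁻¹ * (A (i - 1) * (A i)⁻¹ * A (i + 1))
        = (A (i - 1) * (A i)⁻¹ * A (i + 1)) * (A i)⁻¹ := by
      calc (A i)⁻¹ * (A (i - 1) * (A i)⁻¹ * A (i + 1))
          = A (i - 1) * ((A (i - 1))⁻¹ * ((A i)⁻¹ * A (i - 1))) * ((A i)⁻¹ * A (i + 1)) := by
            group
        _ = A (i - 1) * (((A i)⁻¹ * A (i + 1)) * ((A i)⁻¹ * ((A (i + 1))⁻¹ * A i)))
              * ((A i)⁻¹ * A (i + 1)) := by rw [h]
        _ = (A (i - 1) * (A i)⁻¹ * A (i + 1)) * (A i)⁻¹ := by group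
    have h'' : Commute (A i)⁻¹ (A (i - 1) * (A i)⁻¹ * A (i + 1)) := h'
    exact Commute.inv_left_iff.mp h''
  have H1 : (A 2)⁻¹ * A 1 * ((A 0)⁻¹ * A 2) * ((A 1)⁻¹ * A 0) = 1 := by
    have h := h1
    rw [hD 0, hD 1, hD 2, cidx2, cidx1, cidx4, cidx3, cidx6, cidx5] at h
    exact h
  have Hqy := hq 0; rw [cidx1, cidx2] at Hqy
  have Hqz := hq 1; rw [cidx3, cidx4] at Hqz
  have Hqx := hq 2; rw [cidx5, cidx6] at Hqx
  have Hsx := hs 0; rw [cidx1, cidx2] at Hsx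
  have Hsy := hs 1; rw [cidx3, cidx4] at Hsy
  have Hsz := hs 2; rw [cidx5, cidx6] at Hsz
  obtain ⟨cxy, cyz, czx⟩ := ds_core (A 0) (A 1) (A 2) Hqy Hqz Hqx Hsx Hsy Hsz H1
  have hcomm : ∀ i j, Commute (A i) (A j) := by
    intro i j
    rcases zmod3_cases i with rfl | rfl | rfl <;> rcases zmod3_cases j with rfl | rfl | rfl
    exacts [Commute.refl _, cxy, czx.symm, cxy.symm, Commute.refl _, cyz,
      czx, cyz.symm, Commute.refl _]
  refine ⟨hcomm, ?_, ?_, ?_⟩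
  · intro i
    rw [hC i, ((hcomm i (i - 1)).inv_left).eq]
    group
  · intro i
    rw [hB i]
    exact ((hcomm (i + 1) (i - 1)).inv_left).eq
  · intro i
    rw [hD i]
    exact ((hcomm (i - 1) (i + 1)).inv_left).eq

/-! ### The abelianization homomorphism -/

/-- Images of the generators in `ℤ³`. -/
def FF : Letter → Multiplicative (ZMod 3 → ℤ)
  | .a i => Multiplicative.ofAdd (Pi.single i 1)
  | .b i => Multiplicative.ofAdd (Pi.single (i - 1) 1 - Pi.single (i + 1) 1)
  | .c i => Multiplicative.ofAdd (-Pi.single i 1)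
  | .d i => Multiplicative.ofAdd (Pi.single (i + 1) 1 - Pi.single (i - 1) 1)

lemma FF_rels : ∀ r ∈ rels, FreeGroup.lift FF r = 1 := by
  intro r hr
  induction hr with
  | r1 =>
      simp only [f, map_mul, FreeGroup.lift_apply_of, FF, ← ofAdd_add, ofAdd_eq_one,
        cidx1, cidx2, cidx3, cidx4, cidx5, cidx6]
      abel
  | r2a i =>
      simp only [f, map_mul, FreeGroup.lift_apply_of, FF, ← ofAdd_add, ofAdd_eq_one]
      abel
  | r2b i =>
      simp only [f, map_mul, FreeGroup.lift_apply_of, FF, ← ofAdd_add, ofAdd_eq_one]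
      abel
  | r3a i =>
      simp only [f, map_mul, map_inv, FreeGroup.lift_apply_of, FF, ← ofAdd_add, ← ofAdd_neg,
        ofAdd_eq_one, idx1, idx2, idx3, idx4]
      abel
  | r3b i =>
      simp only [f, map_mul, map_inv, FreeGroup.lift_apply_of, FF, ← ofAdd_add, ← ofAdd_neg,
        ofAdd_eq_one, idx1, idx2, idx3, idx4]
      abel
  | r3c i =>
      simp only [f, map_mul, map_inv, FreeGroup.lift_apply_of, FF, ← ofAdd_add, ← ofAdd_neg,
        ofAdd_eq_one, idx1, idx2, idx3, idx4]
      abel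
  | r3d i =>
      simp only [f, map_mul, map_inv, FreeGroup.lift_apply_of, FF, ← ofAdd_add, ← ofAdd_neg,
        ofAdd_eq_one, idx1, idx2, idx3, idx4]
      abel
  | r7 i w hw =>
      simp only [map_mul, map_inv]
      exact mul_inv_eq_one.mpr (mul_comm _ _)
  | r8 i u v hu hv =>
      simp only [map_mul, map_inv]
      exact mul_inv_eq_one.mpr (mul_comm _ _)

/-- Relators map to `1` in the presented group. -/
lemma relquot {r : FreeGroup Letter} (h : isRel r) :
    (PresentedGroup.mk rels r : DSGroup) = 1 :=
  (QuotientGroup.eq_one_iff r).mpr (Subgroup.subset_normalClosure h)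

lemma mk_f (x : Letter) :
    (PresentedGroup.mk rels (f x) : DSGroup) = PresentedGroup.of x := rfl

/-- The inverse homomorphism, given three commuting elements indexed by `ZMod 3`. -/
def milH {G : Type*} [Group G] (a : ZMod 3 → G)
    (h01 : Commute (a 0) (a 1)) (h02 : Commute (a 0) (a 2)) (h12 : Commute (a 1) (a 2)) :
    Multiplicative (ZMod 3 → ℤ) →* G where
  toFun g := a 0 ^ (Multiplicative.toAdd g 0) * a 1 ^ (Multiplicative.toAdd g 1)
      * a 2 ^ (Multiplicative.toAdd g 2)
  map_one' := by simp
  map_mul' g h := by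
    simp only [toAdd_mul, Pi.add_apply, zpow_add]
    rw [Commute.mul_mul_mul_comm
      (h01.zpow_zpow (Multiplicative.toAdd h 0) (Multiplicative.toAdd g 1))]
    rw [Commute.mul_mul_mul_comm
      (((h02.zpow_zpow (Multiplicative.toAdd h 0) (Multiplicative.toAdd g 2)).mul_left
        (h12.zpow_zpow (Multiplicative.toAdd h 1) (Multiplicative.toAdd g 2))))]

lemma milH_apply {G : Type*} [Group G] (a : ZMod 3 → G)
    (h01 : Commute (a 0) (a 1)) (h02 : Commute (a 0) (a 2)) (h12 : Commute (a 1) (a 2))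
    (v : ZMod 3 → ℤ) :
    milH a h01 h02 h12 (Multiplicative.ofAdd v) = a 0 ^ v 0 * a 1 ^ v 1 * a 2 ^ v 2 := rfl

lemma sv1 : (Pi.single (0 : ZMod 3) (1 : ℤ) : ZMod 3 → ℤ) 0 = 1 := by decide
lemma sv2 : (Pi.single (0 : ZMod 3) (1 : ℤ) : ZMod 3 → ℤ) 1 = 0 := by decide
lemma sv3 : (Pi.single (0 : ZMod 3) (1 : ℤ) : ZMod 3 → ℤ) 2 = 0 := by decide
lemma sv4 : (Pi.single (1 : ZMod 3) (1 : ℤ) : ZMod 3 → ℤ) 0 = 0 := by decide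
lemma sv5 : (Pi.single (1 : ZMod 3) (1 : ℤ) : ZMod 3 → ℤ) 1 = 1 := by decide
lemma sv6 : (Pi.single (1 : ZMod 3) (1 : ℤ) : ZMod 3 → ℤ) 2 = 0 := by decide
lemma sv7 : (Pi.single (2 : ZMod 3) (1 : ℤ) : ZMod 3 → ℤ) 0 = 0 := by decide
lemma sv8 : (Pi.single (2 : ZMod 3) (1 : ℤ) : ZMod 3 → ℤ) 1 = 0 := by decide
lemma sv9 : (Pi.single (2 : ZMod 3) (1 : ℤ) : ZMod 3 → ℤ) 2 = 1 := by decide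

/-- The associated group of the Dynnikov semigroup is free abelian of rank 3:
there is an isomorphism onto `ℤ³` sending `ã_0, ã_1, ã_2` to the standard free basis,
and in the group one has `b̃_i = ã_{i-1} ã_{i+1}⁻¹`, `c̃_i = ã_i⁻¹`,
`d̃_i = ã_{i+1} ã_{i-1}⁻¹`. -/
theorem dsGroup_free_abelian_rank_three :
    ∃ e : DSGroup ≃* Multiplicative (ZMod 3 → ℤ),
      (∀ i : ZMod 3,
        e (PresentedGroup.of (Letter.a i)) = Multiplicative.ofAdd (Pi.single i 1)) ∧
      (∀ i : ZMod 3,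
        (PresentedGroup.of (Letter.b i) : DSGroup) =
          PresentedGroup.of (Letter.a (i - 1)) * (PresentedGroup.of (Letter.a (i + 1)))⁻¹) ∧
      (∀ i : ZMod 3,
        (PresentedGroup.of (Letter.c i) : DSGroup) =
          (PresentedGroup.of (Letter.a i))⁻¹) ∧
      (∀ i : ZMod 3,
        (PresentedGroup.of (Letter.d i) : DSGroup) =
          PresentedGroup.of (Letter.a (i + 1)) * (PresentedGroup.of (Letter.a (i - 1)))⁻¹) := by
  have h1 : (PresentedGroup.of (Letter.d 0) : DSGroup) * PresentedGroup.of (Letter.d 1)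
      * PresentedGroup.of (Letter.d 2) = 1 := by
    have h := relquot isRel.r1
    simpa only [map_mul, mk_f] using h
  have h2a : ∀ i, (PresentedGroup.of (Letter.b i) : DSGroup) * PresentedGroup.of (Letter.d i)
      = 1 := by
    intro i
    have h := relquot (isRel.r2a i)
    simpa only [map_mul, mk_f] using h
  have h3a : ∀ i, (PresentedGroup.of (Letter.a i) : DSGroup)
      = PresentedGroup.of (Letter.a (i + 1)) * PresentedGroup.of (Letter.d (i - 1)) := by
    intro i
    have h := relquot (isRel.r3a i)
    rw [map_mul, map_inv, map_mul, mk_f, mk_f, mk_f] at h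
    exact mul_inv_eq_one.mp h
  have h3b : ∀ i, (PresentedGroup.of (Letter.b i) : DSGroup)
      = PresentedGroup.of (Letter.a (i - 1)) * PresentedGroup.of (Letter.c (i + 1)) := by
    intro i
    have h := relquot (isRel.r3b i)
    rw [map_mul, map_inv, map_mul, mk_f, mk_f, mk_f] at h
    exact mul_inv_eq_one.mp h
  have h3c : ∀ i, (PresentedGroup.of (Letter.c i) : DSGroup)
      = PresentedGroup.of (Letter.b (i - 1)) * PresentedGroup.of (Letter.c (i + 1)) := by
    intro i
    have h := relquot (isRel.r3c i)
    rw [map_mul, map_inv, map_mul, mk_f, mk_f, mk_f] at h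
    exact mul_inv_eq_one.mp h
  have h3d : ∀ i, (PresentedGroup.of (Letter.d i) : DSGroup)
      = PresentedGroup.of (Letter.a (i + 1)) * PresentedGroup.of (Letter.c (i - 1)) := by
    intro i
    have h := relquot (isRel.r3d i)
    rw [map_mul, map_inv, map_mul, mk_f, mk_f, mk_f] at h
    exact mul_inv_eq_one.mp h
  obtain ⟨hcomm, hCeq, hBeq, hDeq⟩ := ds_derivation
    (fun i => (PresentedGroup.of (Letter.a i) : DSGroup))
    (fun i => (PresentedGroup.of (Letter.b i) : DSGroup))
    (fun i => (PresentedGroup.of (Letter.c i) : DSGroup))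
    (fun i => (PresentedGroup.of (Letter.d i) : DSGroup))
    h1 h2a h3a h3b h3c h3d
  have hcomm' : ∀ i j : ZMod 3,
      Commute (PresentedGroup.of (Letter.a i) : DSGroup) (PresentedGroup.of (Letter.a j)) :=
    hcomm
  have hCeq' : ∀ i : ZMod 3, (PresentedGroup.of (Letter.c i) : DSGroup)
      = (PresentedGroup.of (Letter.a i))⁻¹ := hCeq
  have hBeq' : ∀ i : ZMod 3, (PresentedGroup.of (Letter.b i) : DSGroup)
      = PresentedGroup.of (Letter.a (i - 1)) * (PresentedGroup.of (Letter.a (i + 1)))⁻¹ := hBeq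
  have hDeq' : ∀ i : ZMod 3, (PresentedGroup.of (Letter.d i) : DSGroup)
      = PresentedGroup.of (Letter.a (i + 1)) * (PresentedGroup.of (Letter.a (i - 1)))⁻¹ := hDeq
  refine ⟨MonoidHom.toMulEquiv (PresentedGroup.toGroup FF_rels)
      (milH (fun i => (PresentedGroup.of (Letter.a i) : DSGroup))
        (hcomm' 0 1) (hcomm' 0 2) (hcomm' 1 2)) ?_ ?_, fun i => ?_, hBeq', hCeq', hDeq'⟩
  · -- Ψ ∘ Φ = id
    refine PresentedGroup.ext fun ℓ => ?_
    simp only [MonoidHom.comp_apply, MonoidHom.id_apply, PresentedGroup.toGroup.of]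
    cases ℓ with
    | a i =>
        rcases zmod3_cases i with rfl | rfl | rfl <;>
          simp only [FF, milH_apply, sv1, sv2, sv3, sv4, sv5, sv6, sv7, sv8, sv9,
            zpow_zero, zpow_one, one_mul, mul_one]
    | b i =>
        rcases zmod3_cases i with rfl | rfl | rfl <;>
          simp only [FF, milH_apply, Pi.sub_apply, cidx1, cidx2, cidx3, cidx4, cidx5, cidx6,
            sv1, sv2, sv3, sv4, sv5, sv6, sv7, sv8, sv9, zero_sub, sub_zero, sub_self,
            zpow_zero, zpow_one, zpow_neg, one_mul, mul_one, hBeq'] <;>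
          first
            | rfl
            | exact ((hcomm' 1 2).inv_left).eq
            | exact ((hcomm' 0 2).inv_left).eq
            | exact ((hcomm' 0 1).inv_left).eq
            | exact ((hcomm' 1 2).inv_left).eq.symm
            | exact ((hcomm' 0 2).inv_left).eq.symm
            | exact ((hcomm' 0 1).inv_left).eq.symm
    | c i =>
        rcases zmod3_cases i with rfl | rfl | rfl <;>
          simp only [FF, milH_apply, Pi.neg_apply, neg_zero, neg_neg,
            sv1, sv2, sv3, sv4, sv5, sv6, sv7, sv8, sv9,
            zpow_zero, zpow_one, zpow_neg, one_mul, mul_one, hCeq']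
    | d i =>
        rcases zmod3_cases i with rfl | rfl | rfl <;>
          simp only [FF, milH_apply, Pi.sub_apply, cidx1, cidx2, cidx3, cidx4, cidx5, cidx6,
            sv1, sv2, sv3, sv4, sv5, sv6, sv7, sv8, sv9, zero_sub, sub_zero, sub_self,
            zpow_zero, zpow_one, zpow_neg, one_mul, mul_one, hDeq'] <;>
          first
            | rfl
            | exact ((hcomm' 1 2).inv_left).eq
            | exact ((hcomm' 0 2).inv_left).eq
            | exact ((hcomm' 0 1).inv_left).eq
            | exact ((hcomm' 1 2).inv_left).eq.symm
            | exact ((hcomm' 0 2).inv_left).eq.symm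
            | exact ((hcomm' 0 1).inv_left).eq.symm
  · -- Φ ∘ Ψ = id
    refine MonoidHom.ext fun g => ?_
    simp only [MonoidHom.comp_apply, MonoidHom.id_apply]
    have hg : g = Multiplicative.ofAdd (Multiplicative.toAdd g) := rfl
    rw [hg, milH_apply]
    rw [map_mul, map_mul, map_zpow, map_zpow, map_zpow, PresentedGroup.toGroup.of, PresentedGroup.toGroup.of,
      PresentedGroup.toGroup.of]
    show (Multiplicative.ofAdd (Pi.single (0 : ZMod 3) (1 : ℤ))) ^ (Multiplicative.toAdd g 0)
        * (Multiplicative.ofAdd (Pi.single (1 : ZMod 3) (1 : ℤ))) ^ (Multiplicative.toAdd g 1)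
        * (Multiplicative.ofAdd (Pi.single (2 : ZMod 3) (1 : ℤ))) ^ (Multiplicative.toAdd g 2)
        = Multiplicative.ofAdd (Multiplicative.toAdd g)
    rw [← ofAdd_zsmul, ← ofAdd_zsmul, ← ofAdd_zsmul, ← ofAdd_add, ← ofAdd_add]
    congr 1
    funext j
    rcases zmod3_cases j with rfl | rfl | rfl <;>
      simp [sv1, sv2, sv3, sv4, sv5, sv6, sv7, sv8, sv9]
  · show PresentedGroup.toGroup FF_rels (PresentedGroup.of (Letter.a i))
        = Multiplicative.ofAdd (Pi.single i 1)
    rw [PresentedGroup.toGroup.of]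
    rfl
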